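/- Let M_F = I_T − F(F'F)⁻¹F' for a T×k matrix F of full column rank, and let ε ∈ ℝ^T. Then ε' M_F ε = vec(M_F)'(ε ⊗ ε), and Tr(M_F) = T − k. Moreover, with A₂ = I_{T²} + 𝒦_T − 2 diag(𝒦_T) + vec(I_T)vec(I_T)', where 𝒦_T is the T²×T² commutation matrix, one has vec(M_F)' A₂ vec(M_F) = 2(T − k − a) + (T − k)², where a = ∑_{t=1}^T ((M_F)_{tt})². -/
import Mathlib


open Matrix

/-- `vec` of a square matrix, as a function on the product index type. -/
def mvec {T : ℕ} (M : Matrix (Fin T) (Fin T) ℝ) : Fin T × Fin T → ℝ := fun p => M p.1 p.2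

/-- The commutation matrix `𝒦_T`, characterized by `𝒦_T vec(B) = vec(Bᵀ)`. -/
def commMat (T : ℕ) : Matrix (Fin T × Fin T) (Fin T × Fin T) ℝ :=
  fun p q => if q = (p.2, p.1) then 1 else 0

/-- `diag(𝒦_T)`: the diagonal matrix with the diagonal of the commutation matrix. -/
def diagComm (T : ℕ) : Matrix (Fin T × Fin T) (Fin T × Fin T) ℝ :=
  Matrix.diagonal fun p => if p.1 = p.2 then 1 else 0

/-- `A₂ = I + 𝒦_T - 2 diag(𝒦_T) + vec(I)vec(I)'`. -/
def matA2 (T : ℕ) : Matrix (Fin T × Fin T) (Fin T × Fin T) ℝ :=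
  1 + commMat T - (2 : ℝ) • diagComm T +
    Matrix.vecMulVec (mvec (1 : Matrix (Fin T) (Fin T) ℝ)) (mvec 1)

/-- A square real matrix of full rank is a unit. -/
lemma isUnit_of_rank_eq_card {k : ℕ} (A : Matrix (Fin k) (Fin k) ℝ) (h : A.rank = k) :
    IsUnit A := by
  rw [← Matrix.mulVec_surjective_iff_isUnit]
  have hr : LinearMap.range A.mulVecLin = ⊤ := by
    apply Submodule.eq_top_of_finrank_eq
    rw [← Matrix.rank, h]; simp
  intro v
  obtain ⟨w, hw⟩ := LinearMap.range_eq_top.mp hr v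
  exact ⟨w, hw⟩

/-- The quadratic form computation for a symmetric idempotent matrix. -/
lemma quad_A2 (T : ℕ) (MF : Matrix (Fin T) (Fin T) ℝ) (c : ℝ)
    (hsym : MFᵀ = MF) (hid : MF * MF = MF) (htr : MF.trace = c) :
    mvec MF ⬝ᵥ (matA2 T).mulVec (mvec MF) =
      2 * (c - ∑ t, (MF t t) ^ 2) + c ^ 2 := by
  have hMFs : ∀ t s, MF s t = MF t s := fun t s => by
    conv_rhs => rw [← hsym]
    rw [transpose_apply]
  have htr' : ∑ t, MF t t = c := htr
  have h2 : ∑ p : Fin T × Fin T, mvec MF p * mvec MF (p.2, p.1) = c := by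
    rw [Fintype.sum_prod_type]
    calc ∑ t, ∑ s, mvec MF (t, s) * mvec MF (s, t)
        = ∑ t, (MF * MF) t t := by
          refine Finset.sum_congr rfl fun t _ => ?_
          simp [Matrix.mul_apply, mvec]
      _ = c := by rw [hid]; exact htr
  have h1 : ∑ p : Fin T × Fin T, mvec MF p * mvec MF p = c := by
    rw [← h2]
    refine Finset.sum_congr rfl fun p _ => ?_
    rw [show mvec MF (p.2, p.1) = mvec MF p from hMFs p.1 p.2]
  have h3 : ∑ p : Fin T × Fin T, (if p.1 = p.2 then (1:ℝ) else 0) * mvec MF p * mvec MF p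
      = ∑ t, (MF t t) ^ 2 := by
    rw [Fintype.sum_prod_type]
    refine Finset.sum_congr rfl fun t _ => ?_
    simp [mvec, sq, Finset.sum_ite_eq]
  have h4 : mvec (1 : Matrix (Fin T) (Fin T) ℝ) ⬝ᵥ mvec MF = c := by
    simp only [dotProduct, mvec, Fintype.sum_prod_type, Matrix.one_apply]
    rw [← htr']
    refine Finset.sum_congr rfl fun t _ => ?_
    simp
  have expand : (matA2 T).mulVec (mvec MF) =
      mvec MF + (commMat T).mulVec (mvec MF) - (2:ℝ) • (diagComm T).mulVec (mvec MF)
        + (mvec (1 : Matrix (Fin T) (Fin T) ℝ) ⬝ᵥ mvec MF) • mvec (1 : Matrix (Fin T) (Fin T) ℝ) := by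
    funext p
    simp only [matA2, add_mulVec, sub_mulVec, one_mulVec, smul_mulVec,
      Pi.add_apply, Pi.sub_apply, Pi.smul_apply, smul_eq_mul]
    have : (vecMulVec (mvec (1 : Matrix (Fin T) (Fin T) ℝ)) (mvec 1)) *ᵥ (mvec MF) =
        (mvec (1 : Matrix (Fin T) (Fin T) ℝ) ⬝ᵥ mvec MF) • mvec (1 : Matrix (Fin T) (Fin T) ℝ) := by
      funext q
      simp only [mulVec, dotProduct, vecMulVec_apply, Pi.smul_apply, smul_eq_mul,
        Finset.mul_sum, Finset.sum_mul]
      refine Finset.sum_congr rfl fun r _ => ?_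
      ring
    rw [this]
    simp [smul_eq_mul]
  rw [expand]
  rw [dotProduct_add, dotProduct_sub, dotProduct_smul, dotProduct_smul]
  have hKv : (commMat T).mulVec (mvec MF) = fun p => mvec MF (p.2, p.1) := by
    funext p
    simp [commMat, mulVec, dotProduct]
  have hDv : (diagComm T).mulVec (mvec MF) = fun p => (if p.1 = p.2 then (1:ℝ) else 0) * mvec MF p := by
    funext p
    simp [diagComm, mulVec_diagonal]
  rw [hKv, hDv, h4]
  have e1 : mvec MF ⬝ᵥ mvec MF = c := h1
  have e2 : (mvec MF ⬝ᵥ fun p => mvec MF (p.2, p.1)) = c := h2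
  have e3 : (mvec MF ⬝ᵥ fun p => (if p.1 = p.2 then (1:ℝ) else 0) * mvec MF p) = ∑ t, (MF t t)^2 := by
    rw [dotProduct]
    rw [← h3]
    refine Finset.sum_congr rfl fun p _ => ?_
    ring
  have e4 : mvec MF ⬝ᵥ mvec (1 : Matrix (Fin T) (Fin T) ℝ) = c := by
    rw [← h4, dotProduct_comm]
  rw [dotProduct_add, e1, e2, e3, e4]
  simp only [smul_eq_mul]
  ring

/-- for `M_F = I - F(F'F)⁻¹F'` with `F` of full column rank `k` and
any `ε ∈ ℝ^T`: `ε'M_Fε = vec(M_F)'(ε ⊗ ε)`, `Tr(M_F) = T - k`, and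
`vec(M_F)' A₂ vec(M_F) = 2(T - k - a) + (T - k)²` where `a = ∑_t ((M_F)_{tt})²`. -/
theorem stmt_19 (T k : ℕ) (hk : k ≤ T)
    (F : Matrix (Fin T) (Fin k) ℝ) (hF : F.rank = k)
    (MF : Matrix (Fin T) (Fin T) ℝ) (hMF : MF = 1 - F * (Fᵀ * F)⁻¹ * Fᵀ)
    (ε : Fin T → ℝ) :
    (ε ⬝ᵥ MF.mulVec ε = mvec MF ⬝ᵥ fun p => ε p.1 * ε p.2) ∧
      MF.trace = (T : ℝ) - k ∧
      mvec MF ⬝ᵥ (matA2 T).mulVec (mvec MF) =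
        2 * ((T : ℝ) - k - ∑ t, (MF t t) ^ 2) + ((T : ℝ) - k) ^ 2 := by
  have hU : IsUnit (Fᵀ * F) := by
    apply isUnit_of_rank_eq_card
    rw [Matrix.rank_transpose_mul_self, hF]
  have hUd : IsUnit (Fᵀ * F).det := (Matrix.isUnit_iff_isUnit_det _).mp hU
  have hinv : (Fᵀ * F) * (Fᵀ * F)⁻¹ = 1 := Matrix.mul_nonsing_inv _ hUd
  have hsym : MFᵀ = MF := by
    rw [hMF]
    simp [transpose_sub, transpose_mul, Matrix.transpose_nonsing_inv, Matrix.mul_assoc]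
  have hid : MF * MF = MF := by
    rw [hMF]
    have hPP : (F * (Fᵀ * F)⁻¹ * Fᵀ) * (F * (Fᵀ * F)⁻¹ * Fᵀ) = F * (Fᵀ * F)⁻¹ * Fᵀ := by
      calc (F * (Fᵀ * F)⁻¹ * Fᵀ) * (F * (Fᵀ * F)⁻¹ * Fᵀ)
          = F * (Fᵀ * F)⁻¹ * ((Fᵀ * F) * (Fᵀ * F)⁻¹) * Fᵀ := by
            simp only [Matrix.mul_assoc]
        _ = F * (Fᵀ * F)⁻¹ * Fᵀ := by rw [hinv, Matrix.mul_one]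
    simp only [Matrix.sub_mul, Matrix.mul_sub, Matrix.one_mul, Matrix.mul_one, hPP]
    abel
  have htr : MF.trace = (T : ℝ) - k := by
    rw [hMF, trace_sub, trace_one]
    have : (F * (Fᵀ * F)⁻¹ * Fᵀ).trace = (k : ℝ) := by
      rw [Matrix.trace_mul_comm, ← Matrix.mul_assoc, hinv, trace_one]
      simp
    rw [this]; simp
  refine ⟨?_, htr, quad_A2 T MF _ hsym hid htr⟩
  simp only [dotProduct, mulVec, mvec, Fintype.sum_prod_type, Finset.mul_sum,
    Finset.sum_mul]
  apply Finset.sum_congr rfl; intros; apply Finset.sum_congr rfl; intros; ring
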